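/- Let θ ∈ (0, 1/4]. For x ∈ [-1, 1], let A(x) = [[(2-θ)(1-x), -(1-θ)(1-x)], [1, 0]], and for a fixed natural number t define g(x) = |(A(x)^t)_{1,1}|, the absolute value of the (1,1) entry of the t-th power. Then g is monotonically decreasing on [-1, θ²/(2-θ)²], and for every x ∈ [θ²/(2-θ)², 1] we have g(x) ≤ g(θ²/(2-θ)²). -/

import Mathlib

open Matrix Finset

def hseq {R : Type*} [CommRing R] (μ ν : R) (n : ℕ) : R :=
  ∑ i ∈ Finset.range (n+1), μ ^ i * ν ^ (n - i)

lemma hseq_zero {R : Type*} [CommRing R] (μ ν : R) : hseq μ ν 0 = 1 := by simp [hseq]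

lemma hseq_one {R : Type*} [CommRing R] (μ ν : R) : hseq μ ν 1 = μ + ν := by
  simp [hseq, Finset.sum_range_succ]; ring

lemma hseq_succ_left {R : Type*} [CommRing R] (μ ν : R) (n : ℕ) :
    hseq μ ν (n+1) = μ * hseq μ ν n + ν ^ (n+1) := by
  unfold hseq
  rw [Finset.sum_range_succ' (fun i => μ ^ i * ν ^ (n+1-i)) (n+1), Finset.mul_sum]
  simp only [Nat.succ_sub_succ, pow_zero, one_mul, Nat.sub_zero, pow_succ]
  congr 1
  exact Finset.sum_congr rfl fun i _ => by ring

lemma hseq_succ_right {R : Type*} [CommRing R] (μ ν : R) (n : ℕ) :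
    hseq μ ν (n+1) = ν * hseq μ ν n + μ ^ (n+1) := by
  unfold hseq
  rw [Finset.sum_range_succ (fun i => μ ^ i * ν ^ (n+1-i)) (n+1), Finset.mul_sum]
  simp only [Nat.sub_self, pow_zero, mul_one]
  congr 1
  refine Finset.sum_congr rfl fun i hi => ?_
  have hi' : i ≤ n := Nat.lt_succ_iff.mp (Finset.mem_range.mp hi)
  rw [show n + 1 - i = (n - i) + 1 from by omega, pow_succ]
  ring

lemma hseq_rec {R : Type*} [CommRing R] (μ ν : R) (n : ℕ) :
    hseq μ ν (n+2) = (μ + ν) * hseq μ ν (n+1) - μ * ν * hseq μ ν n := by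
  have a := hseq_succ_left μ ν (n+1)
  have b := hseq_succ_left μ ν n
  linear_combination a - ν * b

lemma hseq_step2 {R : Type*} [CommRing R] (μ ν : R) (n : ℕ) :
    hseq μ ν (n+2) = μ * ν * hseq μ ν n + μ ^ (n+2) + ν ^ (n+2) := by
  have a := hseq_succ_left μ ν (n+1)
  have b := hseq_succ_right μ ν n
  linear_combination a + μ * b

lemma seq_eq_hseq {R : Type*} [CommRing R] (μ ν : R) (e : ℕ → R)
    (h0 : e 0 = 1) (h1 : e 1 = μ + ν)
    (hrec : ∀ n, e (n+2) = (μ + ν) * e (n+1) - μ * ν * e n) :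
    ∀ n, e n = hseq μ ν n := by
  have key : ∀ n, e n = hseq μ ν n ∧ e (n+1) = hseq μ ν (n+1) := by
    intro n
    induction n with
    | zero => exact ⟨by rw [h0, hseq_zero], by rw [h1, hseq_one]⟩
    | succ k ih => exact ⟨ih.2, by rw [hrec k, ih.1, ih.2, hseq_rec]⟩
  exact fun n => (key n).1

lemma hseq_nonneg (μ ν : ℝ) (hμ : 0 ≤ μ) (hν : 0 ≤ ν) (n : ℕ) : 0 ≤ hseq μ ν n := by
  refine Finset.sum_nonneg fun i _ => ?_
  positivity

lemma pow_add_pow_mono (μ₁ ν₁ μ₂ ν₂ : ℝ) (h1 : 0 ≤ ν₁) (h2 : ν₁ ≤ ν₂) (h3 : ν₂ ≤ μ₂)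
    (h4 : μ₂ ≤ μ₁) (h5 : μ₂ * ν₂ ≤ μ₁ * ν₁) (k : ℕ) :
    μ₂ ^ k + ν₂ ^ k ≤ μ₁ ^ k + ν₁ ^ k := by
  have hν₂ : 0 ≤ ν₂ := le_trans h1 h2
  have hμ₂ : 0 ≤ μ₂ := le_trans hν₂ h3
  have hA : μ₂ ^ k ≤ μ₁ ^ k := pow_le_pow_left₀ hμ₂ h4 k
  have hB : ν₁ ^ k ≤ ν₂ ^ k := pow_le_pow_left₀ h1 h2 k
  have hC : ν₂ ^ k ≤ μ₂ ^ k := pow_le_pow_left₀ hν₂ h3 k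
  have hB0 : 0 ≤ ν₁ ^ k := pow_nonneg h1 k
  have hP : μ₂ ^ k * ν₂ ^ k ≤ μ₁ ^ k * ν₁ ^ k := by
    rw [← mul_pow, ← mul_pow]
    exact pow_le_pow_left₀ (mul_nonneg hμ₂ hν₂) h5 k
  nlinarith [sq_nonneg (μ₁^k - ν₁^k - (μ₂^k - ν₂^k)), sq_nonneg (μ₁^k + ν₁^k + μ₂^k + ν₂^k)]

lemma hseq_mono (μ₁ ν₁ μ₂ ν₂ : ℝ) (h1 : 0 ≤ ν₁) (h2 : ν₁ ≤ ν₂) (h3 : ν₂ ≤ μ₂)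
    (h4 : μ₂ ≤ μ₁) (h5 : μ₂ * ν₂ ≤ μ₁ * ν₁) :
    ∀ n, hseq μ₂ ν₂ n ≤ hseq μ₁ ν₁ n := by
  have hν₂ : 0 ≤ ν₂ := le_trans h1 h2
  have hμ₂ : 0 ≤ μ₂ := le_trans hν₂ h3
  have hμ₁ : 0 ≤ μ₁ := le_trans hμ₂ h4
  have key : ∀ n, (hseq μ₂ ν₂ n ≤ hseq μ₁ ν₁ n) ∧
      (hseq μ₂ ν₂ (n+1) ≤ hseq μ₁ ν₁ (n+1)) := by
    intro n
    induction n with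
    | zero =>
      refine ⟨by rw [hseq_zero, hseq_zero], ?_⟩
      rw [hseq_one, hseq_one]
      have := pow_add_pow_mono μ₁ ν₁ μ₂ ν₂ h1 h2 h3 h4 h5 1
      simpa using this
    | succ k ih =>
      refine ⟨ih.2, ?_⟩
      rw [hseq_step2, hseq_step2]
      have t1 : μ₂ * ν₂ * hseq μ₂ ν₂ k ≤ μ₁ * ν₁ * hseq μ₁ ν₁ k := by
        exact mul_le_mul h5 ih.1 (hseq_nonneg μ₂ ν₂ hμ₂ hν₂ k) (mul_nonneg hμ₁ h1)
      have t2 := pow_add_pow_mono μ₁ ν₁ μ₂ ν₂ h1 h2 h3 h4 h5 (k+2)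
      linarith
  exact fun n => (key n).1

lemma hseq_diag {R : Type*} [CommRing R] (μ : R) (n : ℕ) : hseq μ μ n = (n+1) * μ ^ n := by
  unfold hseq
  rw [Finset.sum_congr rfl (fun i hi => by
    rw [← pow_add, Nat.add_sub_cancel' (Nat.lt_succ_iff.mp (Finset.mem_range.mp hi))]),
    Finset.sum_const, Finset.card_range, nsmul_eq_mul]
  push_cast; ring

lemma hseq_abs_le (μ ν : ℂ) (r : ℝ) (hμ : ‖μ‖ = r) (hν : ‖ν‖ = r) (n : ℕ) :
    ‖hseq μ ν n‖ ≤ (n+1) * r ^ n := by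
  unfold hseq
  refine le_trans (norm_sum_le _ _) ?_
  have : ∀ i ∈ Finset.range (n+1), ‖μ ^ i * ν ^ (n-i)‖ = r ^ n := by
    intro i hi
    rw [norm_mul, norm_pow, norm_pow, hμ, hν, ← pow_add,
      Nat.add_sub_cancel' (Nat.lt_succ_iff.mp (Finset.mem_range.mp hi))]
  rw [Finset.sum_congr rfl this, Finset.sum_const, Finset.card_range, nsmul_eq_mul]
  push_cast; rfl

lemma Mmat_entries (s p : ℝ) (n : ℕ) :
    ((!![s, -p; 1, 0] : Matrix (Fin 2) (Fin 2) ℝ) ^ (n+1)) 0 0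
      = s * ((!![s, -p; 1, 0] : Matrix (Fin 2) (Fin 2) ℝ) ^ n) 0 0
        + ((!![s, -p; 1, 0] : Matrix (Fin 2) (Fin 2) ℝ) ^ n) 0 1 ∧
    ((!![s, -p; 1, 0] : Matrix (Fin 2) (Fin 2) ℝ) ^ (n+1)) 0 1
      = -p * ((!![s, -p; 1, 0] : Matrix (Fin 2) (Fin 2) ℝ) ^ n) 0 0 := by
  constructor <;>
  · rw [pow_succ, Matrix.mul_apply, Fin.sum_univ_two]
    simp
    ring

lemma Mmat_rec (s p : ℝ) (n : ℕ) :
    ((!![s, -p; 1, 0] : Matrix (Fin 2) (Fin 2) ℝ) ^ (n+2)) 0 0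
      = s * ((!![s, -p; 1, 0] : Matrix (Fin 2) (Fin 2) ℝ) ^ (n+1)) 0 0
        - p * ((!![s, -p; 1, 0] : Matrix (Fin 2) (Fin 2) ℝ) ^ n) 0 0 := by
  have a := (Mmat_entries s p (n+1)).1
  have b := (Mmat_entries s p n).2
  rw [a, b]; ring

lemma Mmat_zero (s p : ℝ) : ((!![s, -p; 1, 0] : Matrix (Fin 2) (Fin 2) ℝ) ^ 0) 0 0 = 1 := by
  simp [Matrix.one_apply]

lemma Mmat_one (s p : ℝ) : ((!![s, -p; 1, 0] : Matrix (Fin 2) (Fin 2) ℝ) ^ 1) 0 0 = s := by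
  simp

lemma Mmat_eq_hseq_real (s p μ ν : ℝ) (hsum : μ + ν = s) (hprod : μ * ν = p) (n : ℕ) :
    ((!![s, -p; 1, 0] : Matrix (Fin 2) (Fin 2) ℝ) ^ n) 0 0 = hseq μ ν n := by
  refine seq_eq_hseq μ ν (fun n => ((!![s, -p; 1, 0] : Matrix (Fin 2) (Fin 2) ℝ) ^ n) 0 0)
    (Mmat_zero s p) (by simpa using hsum.symm) (fun n => ?_) n
  beta_reduce
  rw [Mmat_rec, hsum, hprod]

lemma Mmat_eq_hseq_complex (s p : ℝ) (μ ν : ℂ) (hsum : μ + ν = (s:ℂ)) (hprod : μ * ν = (p:ℂ)) (n : ℕ) :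
    (((!![s, -p; 1, 0] : Matrix (Fin 2) (Fin 2) ℝ) ^ n) 0 0 : ℂ) = hseq μ ν n := by
  refine seq_eq_hseq μ ν (fun n => (((!![s, -p; 1, 0] : Matrix (Fin 2) (Fin 2) ℝ) ^ n) 0 0 : ℂ))
    (by simp only [Mmat_zero]; norm_num)
    (by simp only [Mmat_one]; exact_mod_cast hsum.symm) (fun n => ?_) n
  beta_reduce
  rw [hsum, hprod, Mmat_rec]
  push_cast
  ring

noncomputable def eigρ (θ u : ℝ) : ℝ := Real.sqrt (((2-θ)*u)^2 - 4*((1-θ)*u))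
noncomputable def eigμ (θ u : ℝ) : ℝ := ((2-θ)*u + eigρ θ u)/2
noncomputable def eigν (θ u : ℝ) : ℝ := ((2-θ)*u - eigρ θ u)/2

lemma eig_basic (θ u : ℝ) (hθ : 0 < θ) (hθ' : θ ≤ 1/4) (hu : 4*(1-θ)/(2-θ)^2 ≤ u) :
    0 ≤ eigν θ u ∧ eigν θ u ≤ eigμ θ u ∧ eigμ θ u + eigν θ u = (2-θ)*u ∧
    eigμ θ u * eigν θ u = (1-θ)*u ∧ (2-θ) * eigρ θ u ≤ (2-θ)^2*u - 2*(1-θ) := by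
  have h2θ : (0:ℝ) < 2 - θ := by linarith
  have h1θ : (0:ℝ) < 1 - θ := by linarith
  have hupos : 0 < u := lt_of_lt_of_le (by positivity) hu
  have hub : 4*(1-θ) ≤ (2-θ)^2 * u := by
    rw [div_le_iff₀ (by positivity)] at hu; linarith
  have hΔ : 0 ≤ ((2-θ)*u)^2 - 4*((1-θ)*u) := by nlinarith
  have hρ0 : 0 ≤ eigρ θ u := Real.sqrt_nonneg _
  have hρsq : eigρ θ u ^ 2 = ((2-θ)*u)^2 - 4*((1-θ)*u) := Real.sq_sqrt hΔ
  have hρle : eigρ θ u ≤ (2-θ)*u := by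
    calc eigρ θ u ≤ Real.sqrt (((2-θ)*u)^2) := Real.sqrt_le_sqrt (by nlinarith)
    _ = (2-θ)*u := Real.sqrt_sq (by positivity)
  have hbd : (2-θ) * eigρ θ u ≤ (2-θ)^2*u - 2*(1-θ) := by
    have hC : (0:ℝ) ≤ (2-θ)^2*u - 2*(1-θ) := by linarith
    have h1 : Real.sqrt ((2-θ)^2 * (((2-θ)*u)^2 - 4*((1-θ)*u))) = (2-θ) * eigρ θ u := by
      rw [Real.sqrt_mul (sq_nonneg _), Real.sqrt_sq h2θ.le, eigρ]
    calc (2-θ) * eigρ θ u = Real.sqrt ((2-θ)^2 * (((2-θ)*u)^2 - 4*((1-θ)*u))) := h1.symm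
    _ ≤ Real.sqrt (((2-θ)^2*u - 2*(1-θ))^2) := Real.sqrt_le_sqrt (by nlinarith [sq_nonneg (1-θ)])
    _ = (2-θ)^2*u - 2*(1-θ) := Real.sqrt_sq hC
  refine ⟨?_, ?_, by rw [eigμ, eigν]; ring, ?_, hbd⟩
  · rw [eigν]; linarith
  · rw [eigμ, eigν]; linarith
  · rw [eigμ, eigν]
    have h2 : ((2-θ)*u + eigρ θ u)/2 * (((2-θ)*u - eigρ θ u)/2)
        = (((2-θ)*u)^2 - eigρ θ u ^2)/4 := by ring
    rw [h2, hρsq]; ring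

lemma eig_mono (θ u₁ u₂ : ℝ) (hθ : 0 < θ) (hθ' : θ ≤ 1/4)
    (h2 : 4*(1-θ)/(2-θ)^2 ≤ u₂) (h12 : u₂ ≤ u₁) :
    eigν θ u₁ ≤ eigν θ u₂ ∧ eigμ θ u₂ ≤ eigμ θ u₁ := by
  have h1 : 4*(1-θ)/(2-θ)^2 ≤ u₁ := le_trans h2 h12
  have h2θ : (0:ℝ) < 2 - θ := by linarith
  have h1θ : (0:ℝ) < 1 - θ := by linarith
  have hu2pos : 0 < u₂ := lt_of_lt_of_le (by positivity) h2
  have hu1pos : 0 < u₁ := lt_of_lt_of_le hu2pos h12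
  have hub2 : 4*(1-θ) ≤ (2-θ)^2 * u₂ := by
    rw [div_le_iff₀ (by positivity)] at h2; linarith
  have hsq12 : (2-θ)^2*u₂ ≤ (2-θ)^2*u₁ := by nlinarith [sq_nonneg (2-θ)]
  have hub1 : 4*(1-θ) ≤ (2-θ)^2 * u₁ := le_trans hub2 hsq12
  have hΔ1 : 0 ≤ ((2-θ)*u₁)^2 - 4*((1-θ)*u₁) := by nlinarith
  have hΔ2 : 0 ≤ ((2-θ)*u₂)^2 - 4*((1-θ)*u₂) := by nlinarith
  have hbd1 := (eig_basic θ u₁ hθ hθ' h1).2.2.2.2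
  have hbd2 := (eig_basic θ u₂ hθ hθ' h2).2.2.2.2
  have hρ1sq : eigρ θ u₁ ^ 2 = ((2-θ)*u₁)^2 - 4*((1-θ)*u₁) := Real.sq_sqrt hΔ1
  have hρ2sq : eigρ θ u₂ ^ 2 = ((2-θ)*u₂)^2 - 4*((1-θ)*u₂) := Real.sq_sqrt hΔ2
  have hρ1 : 0 ≤ eigρ θ u₁ := Real.sqrt_nonneg _
  have hρ2 : 0 ≤ eigρ θ u₂ := Real.sqrt_nonneg _
  have hgap : 0 ≤ (u₁ - u₂) * ((2-θ)^2*(u₁+u₂) - 4*(1-θ)) :=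
    mul_nonneg (by linarith) (by linarith)
  have hΔmono : ((2-θ)*u₂)^2 - 4*((1-θ)*u₂) ≤ ((2-θ)*u₁)^2 - 4*((1-θ)*u₁) := by nlinarith
  have hρmono : eigρ θ u₂ ≤ eigρ θ u₁ := Real.sqrt_le_sqrt hΔmono
  constructor
  · rw [eigν, eigν]
    rcases eq_or_lt_of_le (add_nonneg hρ1 hρ2) with heq | hlt
    · have ha : eigρ θ u₁ = 0 := by linarith
      have hΔ1z : ((2-θ)*u₁)^2 - 4*((1-θ)*u₁) = 0 := by rw [← hρ1sq, ha]; ring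
      have hu12 : u₁ = u₂ := by nlinarith
      have hb : eigρ θ u₂ = 0 := by linarith
      rw [ha, hb, hu12]
    · have hprodd : (eigρ θ u₁ - eigρ θ u₂) * (eigρ θ u₁ + eigρ θ u₂)
          = (u₁ - u₂) * ((2-θ)^2*(u₁+u₂) - 4*(1-θ)) := by
        have h3 : (eigρ θ u₁ - eigρ θ u₂) * (eigρ θ u₁ + eigρ θ u₂)
            = eigρ θ u₁ ^2 - eigρ θ u₂ ^2 := by ring
        rw [h3, hρ1sq, hρ2sq]; ring
      have hsumbd : (2-θ)*(eigρ θ u₁ + eigρ θ u₂) ≤ (2-θ)^2*(u₁+u₂) - 4*(1-θ) := by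
        linarith
      have key : (2-θ)*(u₁-u₂) * (eigρ θ u₁ + eigρ θ u₂)
          ≤ (eigρ θ u₁ - eigρ θ u₂) * (eigρ θ u₁ + eigρ θ u₂) := by
        rw [hprodd]
        have h4 : (u₁-u₂) * ((2-θ)*(eigρ θ u₁ + eigρ θ u₂))
            ≤ (u₁-u₂) * ((2-θ)^2*(u₁+u₂) - 4*(1-θ)) :=
          mul_le_mul_of_nonneg_left hsumbd (by linarith)
        linarith [h4]
      have h5 := le_of_mul_le_mul_right key hlt
      linarith
  · rw [eigμ, eigμ]
    have : (2-θ)*u₂ ≤ (2-θ)*u₁ := mul_le_mul_of_nonneg_left h12 h2θ.le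
    linarith

lemma ustar_eq (θ : ℝ) (hθ : 0 < θ) (hθ' : θ ≤ 1/4) :
    1 - θ^2/(2-θ)^2 = 4*(1-θ)/(2-θ)^2 := by
  have h2θ : (0:ℝ) < 2 - θ := by linarith
  field_simp
  ring

lemma real_repr (θ x : ℝ) (hθ : 0 < θ) (hθ' : θ ≤ 1/4) (hx : x ≤ θ^2/(2-θ)^2) (t : ℕ) :
    |(((!![(2 - θ) * (1 - x), -((1 - θ) * (1 - x)); 1, 0] : Matrix (Fin 2) (Fin 2) ℝ)) ^ t) 0 0|
      = hseq (eigμ θ (1-x)) (eigν θ (1-x)) t := by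
  have hu : 4*(1-θ)/(2-θ)^2 ≤ 1 - x := by
    have := ustar_eq θ hθ hθ'
    linarith
  obtain ⟨hν0, hνμ, hsum, hprod, _⟩ := eig_basic θ (1-x) hθ hθ' hu
  rw [Mmat_eq_hseq_real ((2-θ)*(1-x)) ((1-θ)*(1-x)) (eigμ θ (1-x)) (eigν θ (1-x)) hsum hprod t]
  exact abs_of_nonneg (hseq_nonneg _ _ (le_trans hν0 hνμ) hν0 t)

theorem agd_entry_monotone_in_x (θ : ℝ) (hθ : 0 < θ) (hθ' : θ ≤ 1/4) (t : ℕ) (ht : 0 < t) :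
    AntitoneOn
      (fun x : ℝ =>
        |(((!![(2 - θ) * (1 - x), -((1 - θ) * (1 - x)); 1, 0] : Matrix (Fin 2) (Fin 2) ℝ)) ^ t) 0 0|)
      (Set.Icc (-1) (θ ^ 2 / (2 - θ) ^ 2)) ∧
    ∀ x ∈ Set.Icc (θ ^ 2 / (2 - θ) ^ 2) (1 : ℝ),
      |(((!![(2 - θ) * (1 - x), -((1 - θ) * (1 - x)); 1, 0] : Matrix (Fin 2) (Fin 2) ℝ)) ^ t) 0 0| ≤
      |(((!![(2 - θ) * (1 - θ ^ 2 / (2 - θ) ^ 2),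
            -((1 - θ) * (1 - θ ^ 2 / (2 - θ) ^ 2)); 1, 0] : Matrix (Fin 2) (Fin 2) ℝ)) ^ t) 0 0| := by
  have h2θ : (0:ℝ) < 2 - θ := by linarith
  have h1θ : (0:ℝ) < 1 - θ := by linarith
  have hust := ustar_eq θ hθ hθ'
  constructor
  · -- antitone part
    intro a ha b hb hab
    simp only
    have hua : 4*(1-θ)/(2-θ)^2 ≤ 1 - a := by have := ha.2; linarith
    have hub : 4*(1-θ)/(2-θ)^2 ≤ 1 - b := by have := hb.2; linarith
    rw [real_repr θ a hθ hθ' ha.2 t, real_repr θ b hθ hθ' hb.2 t]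
    obtain ⟨haν0, haνμ, hasum, haprod, _⟩ := eig_basic θ (1-a) hθ hθ' hua
    obtain ⟨hbν0, hbνμ, hbsum, hbprod, _⟩ := eig_basic θ (1-b) hθ hθ' hub
    obtain ⟨hνm, hμm⟩ := eig_mono θ (1-a) (1-b) hθ hθ' hub (by linarith)
    refine hseq_mono _ _ _ _ haν0 hνm hbνμ hμm ?_ t
    rw [haprod, hbprod]
    have : (1-θ)*(1-b) ≤ (1-θ)*(1-a) := mul_le_mul_of_nonneg_left (by linarith) h1θ.le
    linarith
  · -- complex region
    intro x hx
    set X : ℝ := θ^2/(2-θ)^2 with hX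
    -- RHS value
    have hρX : eigρ θ (1-X) = 0 := by
      rw [eigρ]
      have : ((2-θ)*(1-X))^2 - 4*((1-θ)*(1-X)) = 0 := by
        rw [hust]
        field_simp
        ring
      rw [this, Real.sqrt_zero]
    have hμX : eigμ θ (1-X) = (2-θ)*(1-X)/2 := by rw [eigμ, hρX]; ring
    have hνX : eigν θ (1-X) = (2-θ)*(1-X)/2 := by rw [eigν, hρX]; ring
    have hRHS : |(((!![(2 - θ) * (1 - X), -((1 - θ) * (1 - X)); 1, 0]
          : Matrix (Fin 2) (Fin 2) ℝ)) ^ t) 0 0|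
        = (t+1) * ((2-θ)*(1-X)/2)^t := by
      rw [real_repr θ X hθ hθ' le_rfl t, hμX, hνX, hseq_diag]
    rw [hRHS]
    -- LHS bound via complex eigenvalues
    set s : ℝ := (2-θ)*(1-x) with hs
    set p : ℝ := (1-θ)*(1-x) with hp
    have hx1 : x ≤ 1 := hx.2
    have hxX : X ≤ x := hx.1
    have hp0 : 0 ≤ p := by rw [hp]; nlinarith
    have husx : (2-θ)^2*(1-x) ≤ 4*(1-θ) := by
      have h1 : 1 - x ≤ 1 - X := by linarith
      have h2 : (2-θ)^2*(1-X) = 4*(1-θ) := by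
        rw [hust]; field_simp
      nlinarith [sq_nonneg (2-θ)]
    have hdisc : 0 ≤ 4*p - s^2 := by
      rw [hp, hs]
      nlinarith
    set r : ℝ := Real.sqrt (4*p - s^2) with hr
    have hr0 : 0 ≤ r := Real.sqrt_nonneg _
    have hrsq : r^2 = 4*p - s^2 := Real.sq_sqrt hdisc
    set μ : ℂ := (s/2 : ℝ) + (r/2 : ℝ) * Complex.I with hμ
    set ν : ℂ := (s/2 : ℝ) + (-(r/2) : ℝ) * Complex.I with hν
    have hsum : μ + ν = (s:ℂ) := by
      rw [hμ, hν]; push_cast; ring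
    have hprod : μ * ν = (p:ℂ) := by
      rw [hμ, hν]
      have : ((s/2 : ℝ) + (r/2 : ℝ) * Complex.I) * ((s/2 : ℝ) + (-(r/2) : ℝ) * Complex.I)
          = ((s/2 : ℝ)^2 : ℂ) - ((r/2 : ℝ)^2 : ℂ) * Complex.I^2 := by push_cast; ring
      rw [this, Complex.I_sq, mul_neg_one, sub_neg_eq_add]
      norm_cast
      nlinarith [hrsq]
    have habsμ : ‖μ‖ = Real.sqrt p := by
      rw [hμ, Complex.norm_add_mul_I,
        show (s/2)^2+(r/2)^2 = p from by linear_combination hrsq/4]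
    have habsν : ‖ν‖ = Real.sqrt p := by
      rw [hν, Complex.norm_add_mul_I,
        show (s/2)^2+(-(r/2))^2 = p from by linear_combination hrsq/4]
    have hLHS : |(((!![s, -p; 1, 0] : Matrix (Fin 2) (Fin 2) ℝ)) ^ t) 0 0|
        ≤ (t+1) * (Real.sqrt p)^t := by
      rw [← Real.norm_eq_abs, ← Complex.norm_real, Mmat_eq_hseq_complex s p μ ν hsum hprod t]
      exact hseq_abs_le μ ν (Real.sqrt p) habsμ habsν t
    have h2 : (2-θ)^2*(1-X) = 4*(1-θ) := by
      rw [hust]; field_simp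
    have h1X : 0 ≤ 1 - X := by
      rw [hust]; positivity
    have hc0 : 0 ≤ (2-θ)*(1-X)/2 := by positivity
    have hcsq : ((2-θ)*(1-X)/2)^2 = (1-θ)*(1-X) := by linear_combination ((1-X)/4) * h2
    have hple : p ≤ (1-θ)*(1-X) := by
      rw [hp]
      exact mul_le_mul_of_nonneg_left (by linarith) h1θ.le
    have hsqle : Real.sqrt p ≤ (2-θ)*(1-X)/2 := by
      calc Real.sqrt p ≤ Real.sqrt (((2-θ)*(1-X)/2)^2) :=
            Real.sqrt_le_sqrt (by rw [hcsq]; exact hple)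
      _ = (2-θ)*(1-X)/2 := Real.sqrt_sq hc0
    refine le_trans hLHS ?_
    have := pow_le_pow_left₀ (Real.sqrt_nonneg p) hsqle t
    exact mul_le_mul_of_nonneg_left this (by positivity)
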